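/- Let X = {x^1,...,x^n} and Y = {y^1,...,y^n} be variable families and φ a Boolean formula over X ∪ Y. Consider the implicit CGS with states q_1, q_⊤, q_⊥, self-loops (under all moves) on q_⊤ and q_⊥, agents A^1,...,A^n and B^1,...,B^n each having moves {0, 1} in q_1 and a single move elsewhere, and transition list at q_1 given by δ(q_1) = ((φ[x^j ← (A^j = 1), y^j ← (B^j = 1)], q_⊤), (⊤, q_⊥)). Then q_1 ⊨ ¬⟨A^1,...,A^n⟩X ¬q_⊤ if and only if ∀X. ∃Y. φ is true. -/

import Mathlib

/-!  Core formalization of concurrent game structures (CGS), alternating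
transition systems (ATS), and the logic ATL, following Alur-Henzinger-Kupferman
and Laroussinie-Markey-Oreiby, "On the Expressiveness and Complexity of ATL".

A generic "game structure" `GS Agt Loc P M` has locations labelled by atomic
propositions from `P`, and in each location each agent has a set of available
moves (of type `M`); a joint move (one move per agent) leads to a set of
possible successor locations (a singleton for CGSs, the intersection of the
chosen sets for ATSs). -/

structure GS (Agt Loc P M : Type) where
  lab : Loc → Set P
  mov : Loc → Agt → Set M
  step : Loc → (Agt → M) → Set Loc

namespace GS

variable {Agt Loc P M : Type}

/-- a complete joint move, valid at `ℓ`. -/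
def ValidMove (S : GS Agt Loc P M) (ℓ : Loc) (m : Agt → M) : Prop :=
  ∀ a, m a ∈ S.mov ℓ a

/-- `Next ℓ A mA`: locations reachable from `ℓ` when each member `a` of the
coalition `A` plays `mA a` (and the other agents play arbitrary valid moves). -/
def Next (S : GS Agt Loc P M) (ℓ : Loc) (A : Set Agt) (mA : Agt → M) : Set Loc :=
  {ℓ' | ∃ m, S.ValidMove ℓ m ∧ (∀ a ∈ A, m a = mA a) ∧ ℓ' ∈ S.step ℓ m}

/-- all possible successors of `ℓ`. -/
def NextAll (S : GS Agt Loc P M) (ℓ : Loc) : Set Loc :=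
  {ℓ' | ∃ m, S.ValidMove ℓ m ∧ ℓ' ∈ S.step ℓ m}

/-- the controllable predecessors: `ℓ ∈ CPre A T` iff coalition `A` has a move
forcing the next location to be in `T`. -/
def CPre (S : GS Agt Loc P M) (A : Set Agt) (T : Set Loc) : Set Loc :=
  {ℓ | ∃ mA : Agt → M, (∀ a ∈ A, mA a ∈ S.mov ℓ a) ∧ S.Next ℓ A mA ⊆ T}

theorem cpre_mono (S : GS Agt Loc P M) (A : Set Agt) : Monotone (S.CPre A) := by
  intro T T' h ℓ hℓ
  obtain ⟨mA, hv, hn⟩ := hℓ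
  exact ⟨mA, hv, hn.trans h⟩

/-- A strategy maps the (strict) past history and current location to a move
for each agent (only the moves of the coalition members are relevant). -/
def Strat (Agt Loc M : Type) : Type := List Loc → Loc → Agt → M

def StratValid (S : GS Agt Loc P M) (A : Set Agt) (F : Strat Agt Loc M) : Prop :=
  ∀ h ℓ a, a ∈ A → F h ℓ a ∈ S.mov ℓ a

/-- a strategy is memoryless (state-based) if it only depends on the current
location. -/
def Memoryless (F : Strat Agt Loc M) : Prop :=
  ∀ h h' ℓ a, F h ℓ a = F h' ℓ a

/-- the history `ρ 0, …, ρ (i-1)`. -/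
def hist (ρ : ℕ → Loc) (i : ℕ) : List Loc := List.ofFn (fun j : Fin i => ρ j)

/-- computations from `ℓ`. -/
def Comp (S : GS Agt Loc P M) (ℓ : Loc) (ρ : ℕ → Loc) : Prop :=
  ρ 0 = ℓ ∧ ∀ i, ρ (i + 1) ∈ S.NextAll (ρ i)

/-- the outcomes of a strategy `F` of coalition `A` from `ℓ`. -/
def Out (S : GS Agt Loc P M) (A : Set Agt) (ℓ : Loc) (F : Strat Agt Loc M)
    (ρ : ℕ → Loc) : Prop :=
  ρ 0 = ℓ ∧ ∀ i, ρ (i + 1) ∈ S.Next (ρ i) A (F (hist ρ i) (ρ i))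

end GS

/-! ### ATL syntax and semantics -/

mutual
  /-- ATL state formulas. -/
  inductive SForm (Agt P : Type) : Type where
    | tru : SForm Agt P
    | atom : P → SForm Agt P
    | snot : SForm Agt P → SForm Agt P
    | sor : SForm Agt P → SForm Agt P → SForm Agt P
    | coal : Set Agt → PForm Agt P → SForm Agt P
  /-- ATL path formulas. -/
  inductive PForm (Agt P : Type) : Type where
    | pnot : PForm Agt P → PForm Agt P
    | nxt : SForm Agt P → PForm Agt P
    | untl : SForm Agt P → SForm Agt P → PForm Agt P
end

mutual
  /-- satisfaction of an ATL state formula at a location. -/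
  def SSat {Agt Loc P M : Type} (S : GS Agt Loc P M) : SForm Agt P → Loc → Prop
    | .tru, _ => True
    | .atom p, ℓ => p ∈ S.lab ℓ
    | .snot φ, ℓ => ¬ SSat S φ ℓ
    | .sor φ ψ, ℓ => SSat S φ ℓ ∨ SSat S ψ ℓ
    | .coal A φ, ℓ =>
        ∃ F : GS.Strat Agt Loc M, S.StratValid A F ∧
          ∀ ρ : ℕ → Loc, S.Out A ℓ F ρ → PSat S φ ρ
  /-- satisfaction of an ATL path formula along a sequence of locations. -/
  def PSat {Agt Loc P M : Type} (S : GS Agt Loc P M) : PForm Agt P → (ℕ → Loc) → Prop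
    | .pnot φ, ρ => ¬ PSat S φ ρ
    | .nxt φ, ρ => SSat S φ (ρ 1)
    | .untl φ ψ, ρ => ∃ i, SSat S ψ (ρ i) ∧ ∀ j < i, SSat S φ (ρ j)
end

/-- the release modality:  `φ R ψ := ¬((¬φ) U (¬ψ))`. -/
def PForm.rel {Agt P : Type} (φ ψ : SForm Agt P) : PForm Agt P :=
  .pnot (.untl φ.snot ψ.snot)

/-- the weak-until modality:  `φ W ψ := ψ R (φ ∨ ψ)`. -/
def PForm.wuntl {Agt P : Type} (φ ψ : SForm Agt P) : PForm Agt P :=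
  PForm.rel ψ (φ.sor ψ)

/-- conjunction of state formulas. -/
def SForm.sand {Agt P : Type} (φ ψ : SForm Agt P) : SForm Agt P :=
  .snot (.sor φ.snot ψ.snot)

/-- the set of locations satisfying a state formula. -/
def SatSet {Agt Loc P M : Type} (S : GS Agt Loc P M) (φ : SForm Agt P) : Set Loc :=
  {ℓ | SSat S φ ℓ}

/-! ### Concurrent game structures (explicit) and alternating transition systems -/

/-- an (explicit) concurrent game structure: moves are natural numbers, and the
transition table gives the successor of each joint move. -/
structure CGS (Agt Loc P : Type) where
  lab : Loc → Set P
  chc : Loc → Agt → Finset ℕ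
  edg : Loc → (Agt → ℕ) → Loc

namespace CGS

variable {Agt Loc P : Type}

def WellFormed (G : CGS Agt Loc P) : Prop := ∀ ℓ a, (G.chc ℓ a).Nonempty

def toGS (G : CGS Agt Loc P) : GS Agt Loc P ℕ where
  lab := G.lab
  mov ℓ a := ↑(G.chc ℓ a)
  step ℓ m := {G.edg ℓ m}

/-- a CGS is turn-based if in every location at most one agent has more than
one available move. -/
def TurnBased (G : CGS Agt Loc P) : Prop :=
  ∀ ℓ (a b : Agt), 1 < (G.chc ℓ a).card → 1 < (G.chc ℓ b).card → a = b

end CGS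

/-- an alternating transition system: a move of an agent is a set of locations;
a joint move leads to the intersection of the chosen sets (a singleton when the
ATS is well-formed). -/
structure ATS (Agt Loc P : Type) where
  lab : Loc → Set P
  chc : Loc → Agt → Set (Set Loc)

namespace ATS

variable {Agt Loc P : Type}

/-- well-formedness: each agent always has some available move, and each joint
choice of moves intersects in a singleton. -/
def WellFormed (T : ATS Agt Loc P) : Prop :=
  (∀ ℓ a, (T.chc ℓ a).Nonempty) ∧
  ∀ ℓ (Q : Agt → Set Loc), (∀ a, Q a ∈ T.chc ℓ a) → ∃ ℓ', (⋂ a, Q a) = {ℓ'}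

def toGS (T : ATS Agt Loc P) : GS Agt Loc P (Set Loc) where
  lab := T.lab
  mov := T.chc
  step _ Q := ⋂ a, Q a

end ATS

/-! ### Implicit concurrent game structures -/

/-- boolean formulas over atoms `A_j = c` ("agent `A_j` plays move `c`"). -/
inductive MoveForm (Agt : Type) : Type where
  | tt : MoveForm Agt
  | ff : MoveForm Agt
  | isEq : Agt → ℕ → MoveForm Agt
  | neg : MoveForm Agt → MoveForm Agt
  | conj : MoveForm Agt → MoveForm Agt → MoveForm Agt
  | disj : MoveForm Agt → MoveForm Agt → MoveForm Agt

/-- evaluation of a move formula under a joint move. -/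
def MoveForm.eval {Agt : Type} (m : Agt → ℕ) : MoveForm Agt → Bool
  | .tt => true
  | .ff => false
  | .isEq a c => m a == c
  | .neg φ => ! φ.eval m
  | .conj φ ψ => φ.eval m && ψ.eval m
  | .disj φ ψ => φ.eval m || ψ.eval m

/-- an implicit CGS: in each location, the transition function is given by a
finite list of guarded targets `(φ, ℓ')`; the successor under a joint move is
the target of the first guard that evaluates to true. -/
structure ICGS (Agt Loc P : Type) where
  lab : Loc → Set P
  chc : Loc → Agt → Finset ℕ
  trans : Loc → List (MoveForm Agt × Loc)

namespace ICGS

variable {Agt Loc P : Type}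

/-- the transition function determined by the guarded lists. -/
def edg (G : ICGS Agt Loc P) (ℓ : Loc) (m : Agt → ℕ) : Loc :=
  match (G.trans ℓ).find? (fun e => e.1.eval m) with
  | some e => e.2
  | none => ℓ

def toCGS (G : ICGS Agt Loc P) : CGS Agt Loc P :=
  ⟨G.lab, G.chc, G.edg⟩

def toGS (G : ICGS Agt Loc P) : GS Agt Loc P ℕ := G.toCGS.toGS

/-- well-formedness: every agent always has an available move, and in each
location the last guard of the transition list is `⊤` (hence no joint move can
produce a deadlock). -/
def WellFormed (G : ICGS Agt Loc P) : Prop :=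
  (∀ ℓ a, (G.chc ℓ a).Nonempty) ∧
  ∀ ℓ, ∃ ℓ' : Loc, (G.trans ℓ).getLast? = some (MoveForm.tt, ℓ')

end ICGS

/-! ### Boolean formulas (for QBF-style instances) -/

/-- boolean formulas over a set `V` of variables. -/
inductive BForm (V : Type) : Type where
  | var : V → BForm V
  | bnot : BForm V → BForm V
  | band : BForm V → BForm V → BForm V
  | bor : BForm V → BForm V → BForm V

/-- evaluation of a boolean formula under a valuation. -/
def BForm.eval {V : Type} (g : V → Bool) : BForm V → Bool
  | .var v => g v
  | .bnot φ => ! φ.eval g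
  | .band φ ψ => φ.eval g && ψ.eval g
  | .bor φ ψ => φ.eval g || ψ.eval g

/-- substituting a move formula for each variable. -/
def BForm.subst {V Agt : Type} (σ : V → MoveForm Agt) : BForm V → MoveForm Agt
  | .var v => σ v
  | .bnot φ => .neg (φ.subst σ)
  | .band φ ψ => .conj (φ.subst σ) (ψ.subst σ)
  | .bor φ ψ => .disj (φ.subst σ) (ψ.subst σ)

/-! ### Statement 14

The same implicit CGS as in the `Σ₂`-hardness reduction; the atomic
proposition (here `()`, read `q_⊤`) holds exactly at the state `q_⊤`.
Then `q₁ ⊨ ¬⟨A¹,…,Aⁿ⟩X ¬q_⊤` iff `∀X. ∃Y. φ`. -/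

/-- the implicit CGS of the reduction (locations `0 = q₁`, `1 = q_⊤`,
`2 = q_⊥`; the unique atomic proposition holds exactly at `q_⊤`). -/
def aqsatICGS {n : ℕ} (φ : BForm (Fin n ⊕ Fin n)) :
    ICGS (Fin n ⊕ Fin n) (Fin 3) Unit where
  lab ℓ := {_u : Unit | ℓ = 1}
  chc ℓ _ := if ℓ = 0 then {0, 1} else {0}
  trans ℓ :=
    if ℓ = 0 then [(φ.subst (fun v => .isEq v 1), 1), (.tt, 2)]
    else [(.tt, ℓ)]

lemma subst_eval {n : ℕ} (φ : BForm (Fin n ⊕ Fin n)) (m : Fin n ⊕ Fin n → ℕ) :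
    (φ.subst (fun v => .isEq v 1)).eval m = φ.eval (fun v => m v == 1) := by
  induction φ <;> simp [BForm.subst, BForm.eval, MoveForm.eval, *]

lemma edg_zero {n : ℕ} (φ : BForm (Fin n ⊕ Fin n)) (m : Fin n ⊕ Fin n → ℕ) :
    (aqsatICGS φ).edg 0 m =
      (if φ.eval (fun v => m v == 1) then 1 else 2) := by
  rw [ICGS.edg]
  simp only [aqsatICGS, if_pos rfl, List.find?, subst_eval]
  cases h : φ.eval (fun v => m v == 1) <;>
    simp [h, MoveForm.eval, List.find?_cons, subst_eval]

lemma edg_ne_zero {n : ℕ} (φ : BForm (Fin n ⊕ Fin n)) (ℓ : Fin 3) (hℓ : ℓ ≠ 0)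
    (m : Fin n ⊕ Fin n → ℕ) : (aqsatICGS φ).edg ℓ m = ℓ := by
  rw [ICGS.edg]
  simp [aqsatICGS, if_neg hℓ, MoveForm.eval]

theorem aqsat_negATL_iff (n : ℕ) (φ : BForm (Fin n ⊕ Fin n)) :
    SSat (aqsatICGS φ).toGS
        (.snot (.coal (Set.range (Sum.inl : Fin n → Fin n ⊕ Fin n))
          (.nxt (.snot (.atom ()))))) (0 : Fin 3) ↔
      ∀ gX : Fin n → Bool, ∃ gY : Fin n → Bool,
        φ.eval (Sum.elim gX gY) = true := by
  have hA : ∀ a : Fin n ⊕ Fin n, a ∈ Set.range (Sum.inl : Fin n → Fin n ⊕ Fin n) ↔ ∃ i, Sum.inl i = a := by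
    intro a; rfl
  simp only [SSat, PSat]
  constructor
  · intro h gX
    by_contra hY
    push_neg at hY
    apply h
    refine ⟨fun _ ℓ a => if ℓ = 0 then
        (Sum.elim (fun i => if gX i then 1 else 0) (fun _ => 0) a) else 0, ?_, ?_⟩
    · intro h' ℓ a _
      by_cases hℓ : ℓ = 0 <;>
        rcases a with i | i <;>
        simp [hℓ, ICGS.toGS, ICGS.toCGS, CGS.toGS, aqsatICGS, GS.ValidMove]
    · rintro ρ ⟨h0, hstep⟩
      have := hstep 0
      rw [h0] at this
      obtain ⟨m, hv, hag, hρ1⟩ := this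
      simp only [ICGS.toGS, ICGS.toCGS, CGS.toGS, Set.mem_singleton_iff] at hρ1
      have hm : (fun v => m v == 1) = Sum.elim gX (fun j => m (Sum.inr j) == 1) := by
        funext v
        rcases v with i | j
        · have := hag (Sum.inl i) ⟨i, rfl⟩
          cases h : gX i <;> simp [h] at this <;> simp [this, h]
        · rfl
      have hfalse : φ.eval (fun v => m v == 1) = false := by
        rw [hm]
        exact Bool.eq_false_iff.mpr (hY _)
      rw [edg_zero φ m, hfalse] at hρ1
      simp only [if_neg Bool.false_ne_true] at hρ1
      simp [hρ1, ICGS.toGS, ICGS.toCGS, CGS.toGS, aqsatICGS]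
  · rintro hφ ⟨F, hval, hout⟩
    set gX : Fin n → Bool := fun i => decide (F [] 0 (Sum.inl i) = 1) with hgX
    obtain ⟨gY, hgY⟩ := hφ gX
    set ρ : ℕ → Fin 3 := fun k => if k = 0 then 0 else 1 with hρ
    have hhist0 : GS.hist ρ 0 = [] := by simp [GS.hist]
    have hOut : (aqsatICGS φ).toGS.Out (Set.range Sum.inl) 0 F ρ := by
      refine ⟨rfl, ?_⟩
      intro i
      cases i with
      | zero =>
        refine ⟨fun a => Sum.elim (fun i => F [] 0 (Sum.inl i))
          (fun j => if gY j then 1 else 0) a, ?_, ?_, ?_⟩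
        · intro a
          rcases a with i | j
          · have := hval [] 0 (Sum.inl i) ⟨i, rfl⟩
            simpa [hhist0, ρ] using this
          · by_cases h : gY j <;>
              simp [h, ρ, ICGS.toGS, ICGS.toCGS, CGS.toGS, aqsatICGS, GS.ValidMove]
        · rintro a ⟨i, rfl⟩
          simp [hhist0, ρ]
        · have hm : (fun v => (Sum.elim (fun i => F [] 0 (Sum.inl i))
              (fun j => if gY j then 1 else 0) v : ℕ) == 1) = Sum.elim gX gY := by
            funext v
            rcases v with i | j
            · by_cases h : F [] 0 (Sum.inl i) = 1 <;> simp [hgX, h]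
            · cases h : gY j <;> simp [h]
          show (1 : Fin 3) = (aqsatICGS φ).edg 0 (fun a =>
            Sum.elim (fun i => F [] 0 (Sum.inl i)) (fun j => if gY j then 1 else 0) a)
          rw [edg_zero]
          simp [hm, hgY]
      | succ k =>
        refine ⟨fun a => Sum.elim (fun i => F (GS.hist ρ (k+1)) (ρ (k+1)) (Sum.inl i))
          (fun _ => 0) a, ?_, ?_, ?_⟩
        · intro a
          rcases a with i | j
          · have := hval (GS.hist ρ (k+1)) (ρ (k+1)) (Sum.inl i) ⟨i, rfl⟩
            simpa using this
          · simp [ρ, ICGS.toGS, ICGS.toCGS, CGS.toGS, aqsatICGS, GS.ValidMove]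
        · rintro a ⟨i, rfl⟩
          rfl
        · simp only [ICGS.toGS, ICGS.toCGS, CGS.toGS, Set.mem_singleton_iff, ρ]
          rw [if_neg (Nat.succ_ne_zero k), if_neg (Nat.succ_ne_zero (k+1))]
          rw [edg_ne_zero φ 1 (by decide)]
    have := hout ρ hOut
    simp [ρ, ICGS.toGS, ICGS.toCGS, CGS.toGS, aqsatICGS] at this
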